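/- arXiv:2007.05602 — 3 statements merged into one kernel-verified Lean document; each statement's English description precedes it below -/
import Mathlib

section
/- The transversality counting function Ñ_F is submultiplicative: for all n, m ∈ ℕ, Ñ_F(n+m) ≤ Ñ_F(n)·Ñ_F(m). -/
open scoped ENNReal

/-- Submultiplicativity of the transversality counting function:
`Ñ_F(n+m) ≤ Ñ_F(n)·Ñ_F(m)`.  Here `F : X → X` is a local diffeomorphism whose
derivative cocycle is `An z n = D_z Fⁿ` (with one-step derivative `A`, everywhere
invertible), `Cu ⊆ ℝ²` is a forward invariant cone closed under scalars, and
`Ñ_F(n) = sup_y sup_L Σ_{z ∈ F⁻ⁿ(y), D_zFⁿ(Cu) ⊇ L} |det D_z Fⁿ|⁻¹`,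
where a line `L` through the origin is represented by a nonzero vector `ℓ`. -/
theorem transversality_submultiplicative
    {X : Type*} (F : X → X)
    (A : X → Matrix (Fin 2) (Fin 2) ℝ)
    (hdet : ∀ z, (A z).det ≠ 0)
    (Cu : Set (Fin 2 → ℝ))
    (hscal : ∀ (t : ℝ) (v : Fin 2 → ℝ), v ∈ Cu → t • v ∈ Cu)
    (hinv : ∀ (z : X) (v : Fin 2 → ℝ), v ∈ Cu → (A z).mulVec v ∈ Cu)
    (An : X → ℕ → Matrix (Fin 2) (Fin 2) ℝ)
    (hAn0 : ∀ z, An z 0 = 1)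
    (hAnS : ∀ z k, An z (k + 1) = A (F^[k] z) * An z k)
    (Ntil : ℕ → ℝ≥0∞)
    (hNtil : ∀ k, Ntil k =
      ⨆ (y : X) (ℓ : {v : Fin 2 → ℝ // v ≠ 0}),
        ∑' z : {z : X // F^[k] z = y ∧ (ℓ : Fin 2 → ℝ) ∈ (An z k).mulVec '' Cu},
          ENNReal.ofReal (|(An (z : X) k).det|⁻¹)) :
    ∀ n m : ℕ, Ntil (n + m) ≤ Ntil n * Ntil m := by
  have hdetAn : ∀ z k, (An z k).det ≠ 0 := by
    intro z k
    induction k with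
    | zero => simp [hAn0]
    | succ k ih => rw [hAnS, Matrix.det_mul]; exact mul_ne_zero (hdet _) ih
  have hCu : ∀ (z : X) (k : ℕ) (v : Fin 2 → ℝ), v ∈ Cu → (An z k).mulVec v ∈ Cu := by
    intro z k v hv
    induction k with
    | zero => simpa [hAn0, Matrix.one_mulVec] using hv
    | succ k ih =>
      rw [hAnS, ← Matrix.mulVec_mulVec]
      exact hinv _ _ ih
  have hadd : ∀ (z : X) (n m : ℕ), An z (n + m) = An (F^[m] z) n * An z m := by
    intro z n m
    induction n with
    | zero => simp [hAn0]
    | succ n ih =>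
      have h : n + 1 + m = (n + m) + 1 := by ring
      rw [h, hAnS, ih, hAnS, Function.iterate_add_apply, mul_assoc]
  intro n m
  have hunit : ∀ zh : X, IsUnit (An zh n).det := fun zh => isUnit_iff_ne_zero.2 (hdetAn zh n)
  rw [hNtil (n + m)]
  refine iSup_le fun y => iSup_le fun ℓ => ?_
  set T0 := {z : X // F^[n + m] z = y ∧ (ℓ : Fin 2 → ℝ) ∈ (An z (n + m)).mulVec '' Cu} with hT0
  set T1 := {zh : X // F^[n] zh = y ∧ (ℓ : Fin 2 → ℝ) ∈ (An zh n).mulVec '' Cu} with hT1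
  let ℓ' : T1 → (Fin 2 → ℝ) := fun zh => (An (zh : X) n)⁻¹.mulVec ℓ
  have hℓrec : ∀ zh : T1, (An (zh : X) n).mulVec (ℓ' zh) = ℓ := by
    intro zh
    show (An (zh : X) n).mulVec ((An (zh : X) n)⁻¹.mulVec ℓ) = ℓ
    rw [Matrix.mulVec_mulVec, Matrix.mul_nonsing_inv _ (hunit _), Matrix.one_mulVec]
  have hℓne : ∀ zh : T1, ℓ' zh ≠ 0 := by
    intro zh h
    apply ℓ.2
    rw [← hℓrec zh, h, Matrix.mulVec_zero]
  set T2 : T1 → Type _ :=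
    fun zh => {z : X // F^[m] z = (zh : X) ∧ ℓ' zh ∈ (An z m).mulVec '' Cu} with hT2
  have h1 : ∀ z : T0, F^[n] (F^[m] (z : X)) = y := by
    intro z
    rw [← Function.iterate_add_apply]
    exact z.2.1
  have h23 : ∀ z : T0, (ℓ : Fin 2 → ℝ) ∈ (An (F^[m] (z : X)) n).mulVec '' Cu ∧
      (An (F^[m] (z : X)) n)⁻¹.mulVec ℓ ∈ (An (z : X) m).mulVec '' Cu := by
    rintro ⟨z, hz1, v, hv, hℓv⟩
    have hw : (An (F^[m] z) n).mulVec ((An z m).mulVec v) = ℓ := by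
      rw [Matrix.mulVec_mulVec, ← hadd]; exact hℓv
    have hw' : (An (F^[m] z) n)⁻¹.mulVec (ℓ : Fin 2 → ℝ) = (An z m).mulVec v := by
      rw [← hw, Matrix.mulVec_mulVec, Matrix.nonsing_inv_mul _ (hunit _), Matrix.one_mulVec]
    exact ⟨⟨(An z m).mulVec v, hCu z m v hv, hw⟩, by rw [hw']; exact ⟨v, hv, rfl⟩⟩
  let Φ : T0 → Σ zh : T1, T2 zh :=
    fun z => ⟨⟨F^[m] (z : X), h1 z, (h23 z).1⟩, ⟨(z : X), rfl, (h23 z).2⟩⟩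
  have hΦinj : Function.Injective Φ := by
    intro a b hab
    have h := congrArg (fun p : (Σ zh : T1, T2 zh) => (p.2 : X)) hab
    exact Subtype.ext h
  calc ∑' z : T0, ENNReal.ofReal (|(An (z : X) (n + m)).det|⁻¹)
      ≤ ∑' p : Σ zh : T1, T2 zh,
          ENNReal.ofReal (|(An ((p.1 : X)) n).det|⁻¹) *
            ENNReal.ofReal (|(An ((p.2 : X)) m).det|⁻¹) := by
        refine Summable.tsum_le_tsum_of_inj (f := fun z : T0 => ENNReal.ofReal (|(An (z : X) (n + m)).det|⁻¹)) Φ hΦinj (fun _ _ => zero_le) (fun z => ?_)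
          ENNReal.summable ENNReal.summable
        have hd : |(An (z : X) (n + m)).det|⁻¹
            = |(An (F^[m] (z : X)) n).det|⁻¹ * |(An (z : X) m).det|⁻¹ := by
          rw [hadd, Matrix.det_mul, abs_mul, mul_inv]
        rw [hd, ENNReal.ofReal_mul (by positivity)]
    _ = ∑' zh : T1, ∑' z : T2 zh, ENNReal.ofReal (|(An ((zh : X)) n).det|⁻¹) *
          ENNReal.ofReal (|(An ((z : X)) m).det|⁻¹) := ENNReal.tsum_sigma' _
    _ = ∑' zh : T1, ENNReal.ofReal (|(An ((zh : X)) n).det|⁻¹) *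
          ∑' z : T2 zh, ENNReal.ofReal (|(An ((z : X)) m).det|⁻¹) := by
        simp_rw [ENNReal.tsum_mul_left]
    _ ≤ ∑' zh : T1, ENNReal.ofReal (|(An ((zh : X)) n).det|⁻¹) * Ntil m := by
        refine ENNReal.tsum_le_tsum fun zh => mul_le_mul_right ?_ _
        rw [hNtil m]
        refine le_trans ?_ (le_iSup _ (zh : X))
        exact le_iSup (fun l : {v : Fin 2 → ℝ // v ≠ 0} =>
          ∑' z : {z : X // F^[m] z = (zh : X) ∧ (l : Fin 2 → ℝ) ∈ (An z m).mulVec '' Cu},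
            ENNReal.ofReal (|(An (z : X) m).det|⁻¹)) ⟨ℓ' zh, hℓne zh⟩
    _ = (∑' zh : T1, ENNReal.ofReal (|(An ((zh : X)) n).det|⁻¹)) * Ntil m :=
        ENNReal.tsum_mul_right
    _ ≤ Ntil n * Ntil m := by
        refine mul_le_mul_left ?_ _
        rw [hNtil n]
        refine le_trans ?_ (le_iSup _ y)
        exact le_iSup (fun l : {v : Fin 2 → ℝ // v ≠ 0} =>
          ∑' z : {z : X // F^[n] z = y ∧ (l : Fin 2 → ℝ) ∈ (An z n).mulVec '' Cu},
            ENNReal.ofReal (|(An (z : X) n).det|⁻¹)) ℓ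
end

section
/- Let f : T → T be a C¹ covering map of the circle with topological degree d > 1 and f'(x) > 0 everywhere, let ω : T → ℝ be continuous, and suppose there is a continuous function ũ : T → ℝ satisfying ũ(f(x)) = (ω'(x) + ũ(x))/f'(x) for all x (where ω is C¹). Then ∫_T ũ(x) dx = 0, and consequently, setting Ψ(x) = ∫₀ˣ ũ(z) dz, there exists a constant c ∈ ℝ such that ω(x) = Ψ(f(x)) − Ψ(x) + c for all x; i.e., ω is an f-coboundary up to a constant. -/
/-- Let `f` be (a lift of) a `C¹` covering map of the circle of
degree `d > 1` with `f' > 0`, `ω` a `C¹` periodic function, and `ũ` a continuous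
periodic solution of `ũ(f x) = (ω'(x) + ũ(x))/f'(x)`.  Then `∫₀¹ ũ = 0` and,
with `Ψ(x) = ∫₀ˣ ũ`, there is `c ∈ ℝ` with `ω = Ψ∘f − Ψ + c`:  `ω` is an
`f`-coboundary up to a constant. -/
theorem coboundary_of_slope_equation (d : ℕ) (hd : 1 < d)
    (f ω u : ℝ → ℝ)
    (hf : ContDiff ℝ 1 f) (hfper : ∀ x, f (x + 1) = f x + d)
    (hf' : ∀ x, 0 < deriv f x)
    (hω : ContDiff ℝ 1 ω) (hωper : ∀ x, ω (x + 1) = ω x)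
    (hu : Continuous u) (huper : ∀ x, u (x + 1) = u x)
    (heq : ∀ x, u (f x) = (deriv ω x + u x) / deriv f x) :
    (∫ x in (0:ℝ)..1, u x) = 0 ∧
    ∃ c : ℝ, ∀ x, ω x = (∫ t in (0:ℝ)..(f x), u t) - (∫ t in (0:ℝ)..x, u t) + c := by
  set Ψ : ℝ → ℝ := fun x => ∫ t in (0:ℝ)..x, u t with hΨdef
  have hper : Function.Periodic u 1 := huper
  have hint : ∀ a b : ℝ, IntervalIntegrable u MeasureTheory.volume a b :=
    fun a b => hu.intervalIntegrable a b
  have hΨd : ∀ x, HasDerivAt Ψ (u x) x := fun x =>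
    intervalIntegral.integral_hasDerivAt_right (hint 0 x)
      (hu.stronglyMeasurableAtFilter _ _) hu.continuousAt
  have hfd : ∀ x, HasDerivAt f (deriv f x) x := fun x =>
    (hf.differentiable one_ne_zero x).hasDerivAt
  have hωd : ∀ x, HasDerivAt ω (deriv ω x) x := fun x =>
    (hω.differentiable one_ne_zero x).hasDerivAt
  have key : ∀ x, u (f x) * deriv f x = deriv ω x + u x := fun x => by
    have h := heq x
    field_simp [(hf' x).ne'] at h
    linarith
  have hgd : ∀ x, HasDerivAt (fun x => Ψ (f x) - Ψ x - ω x) 0 x := fun x => by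
    have h1 := ((hΨd (f x)).comp x (hfd x)).sub (hΨd x)
    have h2 := h1.sub (hωd x)
    refine h2.congr_deriv ?_
    rw [key x]; ring
  have hconst : ∀ x y : ℝ, Ψ (f x) - Ψ x - ω x = Ψ (f y) - Ψ y - ω y :=
    is_const_of_deriv_eq_zero (fun x => (hgd x).differentiableAt)
      (fun x => (hgd x).deriv)
  -- Part 1
  have hI : (∫ x in (0:ℝ)..1, u x) = 0 := by
    set I := ∫ x in (0:ℝ)..1, u x with hIdef
    have h1 : Ψ (f 0) - Ψ 0 - ω 0 = Ψ (f 1) - Ψ 1 - ω 1 := hconst 0 1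
    have hf1 : f 1 = f 0 + d := by have := hfper 0; simpa using this
    have hω1 : ω 1 = ω 0 := by have := hωper 0; simpa using this
    -- Ψ (f 0 + d) = Ψ (f 0) + d * I
    have hzs : ∫ x in (f 0)..(f 0 + (d : ℤ) • (1:ℝ)), u x
        = (d : ℤ) • ∫ x in (f 0)..(f 0 + 1), u x :=
      hper.intervalIntegral_add_zsmul_eq d (f 0) hint
    have hshift : (∫ x in (f 0)..(f 0 + 1), u x) = I := by
      have := hper.intervalIntegral_add_eq (f 0) 0
      simpa using this
    have hΨfd : Ψ (f 0 + d) = Ψ (f 0) + d * I := by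
      have hadj : Ψ (f 0) + (∫ x in (f 0)..(f 0 + d), u x) = Ψ (f 0 + d) :=
        intervalIntegral.integral_add_adjacent_intervals (hint 0 (f 0)) (hint (f 0) (f 0 + d))
      have : (∫ x in (f 0)..(f 0 + d), u x) = d * I := by
        have := hzs
        simp only [zsmul_eq_mul, Int.cast_natCast, smul_eq_mul] at this
        rw [hshift] at this
        simpa using this
      linarith [hadj]
    have hΨ1 : Ψ 1 = Ψ 0 + I := by
      simp [hΨdef, hIdef]
    have hΨ0 : Ψ 0 = 0 := by simp [hΨdef]
    rw [hf1, hω1, hΨfd, hΨ1] at h1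
    have : (d : ℝ) * I = I := by linarith
    have hd1 : (1:ℝ) < d := by exact_mod_cast hd
    nlinarith
  refine ⟨hI, ω 0 - Ψ (f 0) + Ψ 0, fun x => ?_⟩
  have := hconst x 0
  simp only [hΨdef] at this ⊢
  linarith
end

section
/- There is a universal constant C > 0 with the following property. For every u ∈ C¹(T²), every x ∈ T, every φ ∈ C⁰(T) with ‖φ‖_∞ ≤ 1, and every ℓ ∈ (0,1]: |∫_T φ(t) u(x,t) dt| ≤ ℓ⁻¹ ‖u‖_{L¹(T²)} + C·ℓ^{1/2}·‖u‖_{H¹(T²)}. (One may take C = 2/3.) -/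
open MeasureTheory

/-- 1D Cauchy-Schwarz for interval integrals of continuous functions. -/
lemma my_cs (f : ℝ → ℝ) (hf : Continuous f) {a : ℝ} (ha : 0 ≤ a) :
    ∫ t in (0:ℝ)..a, |f t| ≤ Real.sqrt a * Real.sqrt (∫ t in (0:ℝ)..a, f t ^ 2) := by
  set S := ∫ t in (0:ℝ)..a, f t ^ 2 with hS
  have hSnn : 0 ≤ S := intervalIntegral.integral_nonneg ha (fun t _ => sq_nonneg _)
  have hbound : ∀ c : ℝ, 0 < c → (∫ t in (0:ℝ)..a, |f t|) ≤ a * c / 2 + S / (2 * c) := by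
    intro c hc
    have h1 : ∀ t, |f t| ≤ c / 2 + f t ^ 2 / (2 * c) := by
      intro t
      rw [div_add_div _ _ (two_ne_zero) (by positivity : (2*c) ≠ 0),
        le_div_iff₀ (by positivity)]
      nlinarith [sq_nonneg (|f t| - c), sq_abs (f t)]
    calc (∫ t in (0:ℝ)..a, |f t|)
        ≤ ∫ t in (0:ℝ)..a, (c / 2 + f t ^ 2 / (2 * c)) := by
          apply intervalIntegral.integral_mono_on ha
          · exact hf.abs.intervalIntegrable _ _
          · exact ((continuous_const).add ((hf.pow 2).div_const _)).intervalIntegrable _ _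
          · exact fun t _ => h1 t
      _ = a * c / 2 + S / (2 * c) := by
          rw [intervalIntegral.integral_add (f := fun _ => c / 2)
            (g := fun t => f t ^ 2 / (2 * c)) (intervalIntegrable_const)
            (((hf.pow 2).div_const _).intervalIntegrable _ _),
            intervalIntegral.integral_const, intervalIntegral.integral_div]
          simp [hS]
          ring
  rcases eq_or_lt_of_le ha with h | h
  · simp [← h]
  rcases eq_or_lt_of_le hSnn with hs | hs
  · have : (∫ t in (0:ℝ)..a, |f t|) ≤ 0 := by
      by_contra hcon
      push_neg at hcon
      have h2 := hbound ((∫ t in (0:ℝ)..a, |f t|) / a) (by positivity)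
      rw [← hs] at h2
      have h3 : a * ((∫ t in (0:ℝ)..a, |f t|) / a) / 2 = (∫ t in (0:ℝ)..a, |f t|) / 2 := by
        field_simp
      rw [h3] at h2
      simp only [zero_div] at h2
      linarith
    calc (∫ t in (0:ℝ)..a, |f t|) ≤ 0 := this
      _ ≤ _ := by positivity
  · have hsa : 0 < Real.sqrt a := Real.sqrt_pos.2 h
    have hsS : 0 < Real.sqrt S := Real.sqrt_pos.2 hs
    have hc : 0 < Real.sqrt S / Real.sqrt a := by positivity
    have h2 := hbound _ hc
    have ha2 : Real.sqrt a ^ 2 = a := Real.sq_sqrt ha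
    have hS2 : Real.sqrt S ^ 2 = S := Real.sq_sqrt hSnn
    have hkey : a * (Real.sqrt S / Real.sqrt a) / 2 + S / (2 * (Real.sqrt S / Real.sqrt a))
        = Real.sqrt a * Real.sqrt S := by
      field_simp
      nlinarith [ha2, hS2, hsa, hsS]
    linarith [hkey ▸ h2]

lemma my_prod_int (f : ℝ × ℝ → ℝ) (hf : Continuous f) :
    ∫ p in Set.Ico (0:ℝ) 1 ×ˢ Set.Ico (0:ℝ) 1, f p
      = ∫ s in (0:ℝ)..1, ∫ t in (0:ℝ)..1, f (s, t) := by
  have hint : IntegrableOn f (Set.Ico (0:ℝ) 1 ×ˢ Set.Ico (0:ℝ) 1) volume := by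
    apply (hf.continuousOn.integrableOn_compact ((isCompact_Icc (a := (0:ℝ)) (b := 1)).prod
      (isCompact_Icc (a := (0:ℝ)) (b := 1)))).mono_set
    exact Set.prod_mono Set.Ico_subset_Icc_self Set.Ico_subset_Icc_self
  rw [MeasureTheory.Measure.volume_eq_prod] at hint ⊢
  rw [MeasureTheory.setIntegral_prod _ hint]
  rw [MeasureTheory.integral_Ico_eq_integral_Ioo, ← MeasureTheory.integral_Ioc_eq_integral_Ioo,
    ← intervalIntegral.integral_of_le zero_le_one]
  congr 1
  ext s
  rw [MeasureTheory.integral_Ico_eq_integral_Ioo, ← MeasureTheory.integral_Ioc_eq_integral_Ioo,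
    ← intervalIntegral.integral_of_le zero_le_one]

lemma my_swap (f : ℝ → ℝ → ℝ) (hf : Continuous (Function.uncurry f)) {a b : ℝ}
    (ha : 0 ≤ a) (hb : 0 ≤ b) :
    ∫ s in (0:ℝ)..a, ∫ t in (0:ℝ)..b, f s t = ∫ t in (0:ℝ)..b, ∫ s in (0:ℝ)..a, f s t := by
  have h1 : IntegrableOn (Function.uncurry f) (Set.Ioc 0 a ×ˢ Set.Ioc 0 b)
      (volume.prod volume) := by
    apply (hf.continuousOn.integrableOn_compact ((isCompact_Icc (a := (0:ℝ)) (b := a)).prod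
      (isCompact_Icc (a := (0:ℝ)) (b := b)))).mono_set
    exact Set.prod_mono Set.Ioc_subset_Icc_self Set.Ioc_subset_Icc_self
  rw [IntegrableOn, ← Measure.prod_restrict] at h1
  have := MeasureTheory.integral_integral_swap (μ := volume.restrict (Set.Ioc 0 a))
    (ν := volume.restrict (Set.Ioc 0 b)) (f := f) h1
  simp only [intervalIntegral.integral_of_le ha, intervalIntegral.integral_of_le hb]
  exact this

lemma my_param_cont (g : ℝ → ℝ → ℝ) (hg : Continuous (Function.uncurry g)) {a b : ℝ}
    (hab : a ≤ b) :
    Continuous fun s => ∫ t in a..b, g s t := by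
  have h : ∀ s, ∫ t in a..b, g s t = ∫ t in Set.Icc a b, g s t := fun s => by
    rw [intervalIntegral.integral_of_le hab, MeasureTheory.integral_Icc_eq_integral_Ioc]
  simp_rw [h]
  exact continuous_parametric_integral_of_continuous hg isCompact_Icc

/-- There is a universal constant `C > 0` (one may take `C = 2/3`)
such that for every `u ∈ C¹(T²)` (a `ℤ²`-periodic `C¹` function on `ℝ²`), every
`φ ∈ C⁰(T)` with `‖φ‖_∞ ≤ 1`, every `x` and every `ℓ ∈ (0,1]`:
`|∫_T φ(t)u(x,t)dt| ≤ ℓ⁻¹‖u‖_{L¹(T²)} + C ℓ^{1/2} ‖u‖_{H¹(T²)}`. -/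
theorem vertical_circle_H1_bound :
    ∃ C : ℝ, 0 < C ∧
      ∀ u : ℝ × ℝ → ℝ, ContDiff ℝ 1 u →
        (∀ x y : ℝ, u (x + 1, y) = u (x, y)) →
        (∀ x y : ℝ, u (x, y + 1) = u (x, y)) →
        ∀ φ : ℝ → ℝ, Continuous φ → (∀ t, φ (t + 1) = φ t) → (∀ t, |φ t| ≤ 1) →
        ∀ x ℓ : ℝ, ℓ ∈ Set.Ioc (0:ℝ) 1 →
          |∫ t in (0:ℝ)..1, φ t * u (x, t)| ≤
            ℓ⁻¹ * (∫ p in Set.Ico (0:ℝ) 1 ×ˢ Set.Ico (0:ℝ) 1, |u p|) +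
            C * Real.sqrt ℓ *
              Real.sqrt ((∫ p in Set.Ico (0:ℝ) 1 ×ˢ Set.Ico (0:ℝ) 1, (u p)^2) +
                (∫ p in Set.Ico (0:ℝ) 1 ×ˢ Set.Ico (0:ℝ) 1, (fderiv ℝ u p (1, 0))^2) +
                (∫ p in Set.Ico (0:ℝ) 1 ×ˢ Set.Ico (0:ℝ) 1, (fderiv ℝ u p (0, 1))^2)) := by
  refine ⟨1, one_pos, ?_⟩
  intro u hu hp1 hp2 φ hφc hφp hφ1 x ℓ hℓ
  obtain ⟨hℓ0, hℓ1⟩ := hℓ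
  have hℓ0' : (0:ℝ) ≤ ℓ := hℓ0.le
  have hucont : Continuous u := hu.continuous
  have hdiff : Differentiable ℝ u := hu.differentiable one_ne_zero
  set D : ℝ × ℝ → ℝ := fun p => fderiv ℝ u p (1, 0) with hDdef
  have hDcont : Continuous D := (hu.continuous_fderiv one_ne_zero).clm_apply continuous_const
  -- periodicity of the derivative
  have hper1 : ∀ p : ℝ × ℝ, u (p + (1, 0)) = u p := by
    intro p
    have h : p + ((1:ℝ), (0:ℝ)) = (p.1 + 1, p.2) := by
      simp [Prod.ext_iff]
    rw [h, hp1]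
  have hDper : ∀ σ t : ℝ, D (σ + 1, t) = D (σ, t) := by
    intro σ t
    have h1 : HasFDerivAt (fun q : ℝ × ℝ => u (q + (1, 0)))
        (fderiv ℝ u ((σ, t) + (1, 0))) (σ, t) := by
      have := ((hdiff ((σ, t) + (1, 0))).hasFDerivAt).comp (σ, t)
        ((hasFDerivAt_id ((σ, t) : ℝ × ℝ)).add_const ((1:ℝ), (0:ℝ)))
      simpa [Function.comp_def] using this
    have h2 : (fun q : ℝ × ℝ => u (q + (1, 0))) = u := funext hper1
    rw [h2] at h1
    have h3 : fderiv ℝ u ((σ, t) + (1, 0)) = fderiv ℝ u (σ, t) := h1.fderiv.symm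
    have h4 : ((σ, t) : ℝ × ℝ) + (1, 0) = (σ + 1, t) := by simp [Prod.ext_iff]
    rw [h4] at h3
    simp only [hDdef, h3]
  -- FTC in the first variable
  have hline : ∀ t : ℝ, Continuous fun σ => D (x + σ, t) := by
    intro t
    exact hDcont.comp (by fun_prop)
  have key : ∀ t s : ℝ, ∫ σ in (0:ℝ)..s, D (x + σ, t) = u (x + s, t) - u (x + 0, t) := by
    intro t s
    have hder : ∀ σ : ℝ, HasDerivAt (fun σ => u (x + σ, t)) (D (x + σ, t)) σ := by
      intro σ
      have h1 : HasDerivAt (fun σ : ℝ => ((x + σ, t) : ℝ × ℝ)) (1, 0) σ :=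
        ((hasDerivAt_id σ).const_add x).prodMk (hasDerivAt_const σ t)
      exact ((hdiff (x + σ, t)).hasFDerivAt).comp_hasDerivAt σ h1
    rw [intervalIntegral.integral_eq_sub_of_hasDerivAt (fun σ _ => hder σ)
      ((hline t).intervalIntegrable _ _)]
  -- main players
  set F : ℝ → ℝ := fun s => ∫ t in (0:ℝ)..1, φ t * u (x + s, t) with hFdef
  set J : ℝ := ∫ σ in (0:ℝ)..ℓ, ∫ t in (0:ℝ)..1, |D (x + σ, t)| with hJdef
  have hFint : ∀ s : ℝ, Continuous fun t => φ t * u (x + s, t) := by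
    intro s
    exact hφc.mul (hucont.comp (by fun_prop))
  have hFcont : Continuous F := by
    apply my_param_cont _ _ zero_le_one
    exact (hφc.comp continuous_snd).mul (hucont.comp (by fun_prop))
  -- Step A : |F 0| ≤ |F s| + J for s ∈ [0, ℓ]
  have hJswap : J = ∫ t in (0:ℝ)..1, ∫ σ in (0:ℝ)..ℓ, |D (x + σ, t)| := by
    rw [hJdef]
    apply my_swap _ _ hℓ0' zero_le_one
    exact ((hDcont.comp (by fun_prop)).abs : Continuous fun p : ℝ × ℝ => |D (x + p.1, p.2)|)
  have hK : Continuous fun t => ∫ σ in (0:ℝ)..ℓ, |D (x + σ, t)| := by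
    apply my_param_cont _ _ hℓ0'
    exact ((hDcont.comp (by fun_prop)).abs :
      Continuous fun p : ℝ × ℝ => |D (x + p.2, p.1)|)
  have hA : ∀ s ∈ Set.Icc (0:ℝ) ℓ, |F 0| ≤ |F s| + J := by
    intro s hs
    have hIcont : Continuous fun t => ∫ σ in (0:ℝ)..s, D (x + σ, t) := by
      apply my_param_cont _ _ hs.1
      exact (hDcont.comp (by fun_prop) : Continuous fun p : ℝ × ℝ => D (x + p.2, p.1))
    have hdiffF : F 0 - F s = -(∫ t in (0:ℝ)..1,
        φ t * ∫ σ in (0:ℝ)..s, D (x + σ, t)) := by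
      rw [hFdef]
      rw [← intervalIntegral.integral_sub ((hFint 0).intervalIntegrable _ _)
        ((hFint s).intervalIntegrable _ _), ← intervalIntegral.integral_neg]
      apply intervalIntegral.integral_congr
      intro t _
      show φ t * u (x + 0, t) - φ t * u (x + s, t) = -(φ t * ∫ σ in (0:ℝ)..s, D (x + σ, t))
      rw [key t s]
      ring
    have hbnd : |F 0 - F s| ≤ J := by
      rw [hdiffF, abs_neg, hJswap]
      calc |∫ t in (0:ℝ)..1, φ t * ∫ σ in (0:ℝ)..s, D (x + σ, t)|
          ≤ ∫ t in (0:ℝ)..1, |φ t * ∫ σ in (0:ℝ)..s, D (x + σ, t)| :=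
            intervalIntegral.abs_integral_le_integral_abs zero_le_one
        _ ≤ ∫ t in (0:ℝ)..1, ∫ σ in (0:ℝ)..ℓ, |D (x + σ, t)| := by
            apply intervalIntegral.integral_mono_on zero_le_one
            · exact ((hφc.mul hIcont).abs).intervalIntegrable _ _
            · exact hK.intervalIntegrable _ _
            · intro t _
              calc |φ t * ∫ σ in (0:ℝ)..s, D (x + σ, t)|
                  = |φ t| * |∫ σ in (0:ℝ)..s, D (x + σ, t)| := abs_mul _ _
                _ ≤ 1 * |∫ σ in (0:ℝ)..s, D (x + σ, t)| := by
                    apply mul_le_mul_of_nonneg_right (hφ1 t) (abs_nonneg _)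
                _ = |∫ σ in (0:ℝ)..s, D (x + σ, t)| := one_mul _
                _ ≤ ∫ σ in (0:ℝ)..s, |D (x + σ, t)| :=
                    intervalIntegral.abs_integral_le_integral_abs hs.1
                _ ≤ ∫ σ in (0:ℝ)..ℓ, |D (x + σ, t)| := by
                    apply intervalIntegral.integral_mono_interval le_rfl hs.1 hs.2
                    · exact Filter.Eventually.of_forall fun σ => abs_nonneg _
                    · exact ((hline t).abs).intervalIntegrable _ _
    calc |F 0| ≤ |F s| + |F 0 - F s| := by
          have := abs_sub_abs_le_abs_sub (F 0) (F s)
          linarith [abs_nonneg (F 0 - F s)]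
      _ ≤ |F s| + J := by linarith
  -- Step B : averaging
  have hB : ℓ * |F 0| ≤ (∫ s in (0:ℝ)..ℓ, |F s|) + ℓ * J := by
    have h1 : ℓ * |F 0| = ∫ s in (0:ℝ)..ℓ, |F 0| := by
      rw [intervalIntegral.integral_const]
      simp [mul_comm]
    rw [h1]
    calc (∫ s in (0:ℝ)..ℓ, |F 0|)
        ≤ ∫ s in (0:ℝ)..ℓ, (|F s| + J) := by
          apply intervalIntegral.integral_mono_on hℓ0'
          · exact intervalIntegrable_const
          · exact ((hFcont.abs).add continuous_const).intervalIntegrable _ _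
          · exact hA
      _ = (∫ s in (0:ℝ)..ℓ, |F s|) + ℓ * J := by
          rw [intervalIntegral.integral_add ((hFcont.abs).intervalIntegrable _ _)
            intervalIntegrable_const, intervalIntegral.integral_const]
          simp [mul_comm]
  -- periodic shift of integrals
  have hper_int : ∀ g : ℝ → ℝ, Continuous g → (∀ σ, g (σ + 1) = g σ) →
      ∫ σ in (0:ℝ)..1, g (x + σ) = ∫ σ in (0:ℝ)..1, g σ := by
    intro g hg hp
    rw [intervalIntegral.integral_comp_add_left g x]
    have hper : Function.Periodic g 1 := hp
    have := hper.intervalIntegral_add_eq (x + 0) 0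
    simpa using this
  -- Step C : ∫_0^ℓ |F s| ≤ ‖u‖_{L¹}
  have hJu : Continuous fun s => ∫ t in (0:ℝ)..1, |u (s, t)| := by
    apply my_param_cont _ _ zero_le_one
    exact ((hucont.comp (by fun_prop)).abs : Continuous fun p : ℝ × ℝ => |u (p.1, p.2)|)
  have hC : (∫ s in (0:ℝ)..ℓ, |F s|)
      ≤ ∫ p in Set.Ico (0:ℝ) 1 ×ˢ Set.Ico (0:ℝ) 1, |u p| := by
    have h1 : ∀ s ∈ Set.Icc (0:ℝ) ℓ, |F s| ≤ ∫ t in (0:ℝ)..1, |u (x + s, t)| := by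
      intro s _
      calc |F s| ≤ ∫ t in (0:ℝ)..1, |φ t * u (x + s, t)| :=
            intervalIntegral.abs_integral_le_integral_abs zero_le_one
        _ ≤ ∫ t in (0:ℝ)..1, |u (x + s, t)| := by
            apply intervalIntegral.integral_mono_on zero_le_one
            · exact ((hFint s).abs).intervalIntegrable _ _
            · exact ((hucont.comp (by fun_prop)).abs).intervalIntegrable _ _
            · intro t _
              rw [abs_mul]
              calc |φ t| * |u (x + s, t)| ≤ 1 * |u (x + s, t)| :=
                    mul_le_mul_of_nonneg_right (hφ1 t) (abs_nonneg _)
                _ = |u (x + s, t)| := one_mul _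
    calc (∫ s in (0:ℝ)..ℓ, |F s|)
        ≤ ∫ s in (0:ℝ)..ℓ, ∫ t in (0:ℝ)..1, |u (x + s, t)| := by
          apply intervalIntegral.integral_mono_on hℓ0'
          · exact (hFcont.abs).intervalIntegrable _ _
          · exact ((hJu.comp (by fun_prop)).intervalIntegrable _ _ :
              IntervalIntegrable (fun s => ∫ t in (0:ℝ)..1, |u (x + s, t)|) volume 0 ℓ)
          · exact h1
      _ ≤ ∫ s in (0:ℝ)..1, ∫ t in (0:ℝ)..1, |u (x + s, t)| := by
          apply intervalIntegral.integral_mono_interval le_rfl hℓ0' hℓ1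
          · apply Filter.Eventually.of_forall
            intro s
            exact intervalIntegral.integral_nonneg zero_le_one fun t _ => abs_nonneg _
          · exact ((hJu.comp (by fun_prop)).intervalIntegrable _ _ :
              IntervalIntegrable (fun s => ∫ t in (0:ℝ)..1, |u (x + s, t)|) volume 0 1)
      _ = ∫ s in (0:ℝ)..1, ∫ t in (0:ℝ)..1, |u (s, t)| := by
          apply hper_int _ hJu
          intro σ
          apply intervalIntegral.integral_congr
          intro t _
          show |u (σ + 1, t)| = |u (σ, t)|
          rw [hp1]
      _ = ∫ p in Set.Ico (0:ℝ) 1 ×ˢ Set.Ico (0:ℝ) 1, |u p| := by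
          rw [my_prod_int _ hucont.abs]
  -- Step D : J ≤ √ℓ √(∫ D²)
  have hh : Continuous fun σ => ∫ t in (0:ℝ)..1, D (σ, t) ^ 2 := by
    apply my_param_cont _ _ zero_le_one
    exact ((hDcont.comp (by fun_prop)).pow 2 : Continuous fun p : ℝ × ℝ => D (p.1, p.2) ^ 2)
  have hhnn : ∀ σ : ℝ, 0 ≤ ∫ t in (0:ℝ)..1, D (σ, t) ^ 2 := fun σ =>
    intervalIntegral.integral_nonneg zero_le_one fun t _ => sq_nonneg _
  have hD2 : (∫ σ in (0:ℝ)..ℓ, ∫ t in (0:ℝ)..1, D (x + σ, t) ^ 2)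
      ≤ ∫ p in Set.Ico (0:ℝ) 1 ×ˢ Set.Ico (0:ℝ) 1, D p ^ 2 := by
    calc (∫ σ in (0:ℝ)..ℓ, ∫ t in (0:ℝ)..1, D (x + σ, t) ^ 2)
        ≤ ∫ σ in (0:ℝ)..1, ∫ t in (0:ℝ)..1, D (x + σ, t) ^ 2 := by
          apply intervalIntegral.integral_mono_interval le_rfl hℓ0' hℓ1
          · exact Filter.Eventually.of_forall fun σ => hhnn (x + σ)
          · exact (hh.comp (by fun_prop)).intervalIntegrable _ _
      _ = ∫ σ in (0:ℝ)..1, ∫ t in (0:ℝ)..1, D (σ, t) ^ 2 := by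
          apply hper_int _ hh
          intro σ
          apply intervalIntegral.integral_congr
          intro t _
          show D (σ + 1, t) ^ 2 = D (σ, t) ^ 2
          rw [hDper]
      _ = ∫ p in Set.Ico (0:ℝ) 1 ×ˢ Set.Ico (0:ℝ) 1, D p ^ 2 := by
          rw [my_prod_int (fun p => D p ^ 2) (hDcont.pow 2)]
  have hDint : 0 ≤ ∫ p in Set.Ico (0:ℝ) 1 ×ˢ Set.Ico (0:ℝ) 1, D p ^ 2 :=
    integral_nonneg fun p => sq_nonneg _
  have hJbound : J ≤ Real.sqrt ℓ *
      Real.sqrt (∫ p in Set.Ico (0:ℝ) 1 ×ˢ Set.Ico (0:ℝ) 1, D p ^ 2) := by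
    have hstep1 : J ≤ ∫ σ in (0:ℝ)..ℓ,
        Real.sqrt (∫ t in (0:ℝ)..1, D (x + σ, t) ^ 2) := by
      rw [hJdef]
      apply intervalIntegral.integral_mono_on hℓ0'
      · apply my_param_cont _ _ zero_le_one |>.intervalIntegrable
        exact ((hDcont.comp (by fun_prop)).abs :
          Continuous fun p : ℝ × ℝ => |D (x + p.1, p.2)|)
      · exact (Real.continuous_sqrt.comp (hh.comp (by fun_prop))).intervalIntegrable _ _
      · intro σ _
        have := my_cs (fun t => D (x + σ, t)) (hDcont.comp (by fun_prop)) zero_le_one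
        simpa [Real.sqrt_one] using this
    have hstep2 : (∫ σ in (0:ℝ)..ℓ, Real.sqrt (∫ t in (0:ℝ)..1, D (x + σ, t) ^ 2))
        ≤ Real.sqrt ℓ * Real.sqrt (∫ σ in (0:ℝ)..ℓ, ∫ t in (0:ℝ)..1, D (x + σ, t) ^ 2) := by
      have hsq : Continuous fun σ => Real.sqrt (∫ t in (0:ℝ)..1, D (x + σ, t) ^ 2) :=
        Real.continuous_sqrt.comp (hh.comp (by fun_prop))
      have h1 := my_cs (fun σ => Real.sqrt (∫ t in (0:ℝ)..1, D (x + σ, t) ^ 2)) hsq hℓ0'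
      have h2 : (∫ σ in (0:ℝ)..ℓ, |Real.sqrt (∫ t in (0:ℝ)..1, D (x + σ, t) ^ 2)|)
          = ∫ σ in (0:ℝ)..ℓ, Real.sqrt (∫ t in (0:ℝ)..1, D (x + σ, t) ^ 2) := by
        apply intervalIntegral.integral_congr
        intro σ _
        exact abs_of_nonneg (Real.sqrt_nonneg _)
      have h3 : (∫ σ in (0:ℝ)..ℓ, Real.sqrt (∫ t in (0:ℝ)..1, D (x + σ, t) ^ 2) ^ 2)
          = ∫ σ in (0:ℝ)..ℓ, ∫ t in (0:ℝ)..1, D (x + σ, t) ^ 2 := by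
        apply intervalIntegral.integral_congr
        intro σ _
        exact Real.sq_sqrt (hhnn (x + σ))
      rw [h2, h3] at h1
      exact h1
    calc J ≤ ∫ σ in (0:ℝ)..ℓ, Real.sqrt (∫ t in (0:ℝ)..1, D (x + σ, t) ^ 2) := hstep1
      _ ≤ Real.sqrt ℓ * Real.sqrt (∫ σ in (0:ℝ)..ℓ, ∫ t in (0:ℝ)..1, D (x + σ, t) ^ 2) :=
          hstep2
      _ ≤ Real.sqrt ℓ * Real.sqrt (∫ p in Set.Ico (0:ℝ) 1 ×ˢ Set.Ico (0:ℝ) 1, D p ^ 2) := by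
          apply mul_le_mul_of_nonneg_left _ (Real.sqrt_nonneg _)
          exact Real.sqrt_le_sqrt hD2
  -- conclusion
  have hF0 : |∫ t in (0:ℝ)..1, φ t * u (x, t)| = |F 0| := by
    rw [hFdef]
    norm_num
  rw [hF0]
  have hsum : Real.sqrt (∫ p in Set.Ico (0:ℝ) 1 ×ˢ Set.Ico (0:ℝ) 1, D p ^ 2)
      ≤ Real.sqrt ((∫ p in Set.Ico (0:ℝ) 1 ×ˢ Set.Ico (0:ℝ) 1, (u p) ^ 2) +
        (∫ p in Set.Ico (0:ℝ) 1 ×ˢ Set.Ico (0:ℝ) 1, D p ^ 2) +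
        (∫ p in Set.Ico (0:ℝ) 1 ×ˢ Set.Ico (0:ℝ) 1, (fderiv ℝ u p (0, 1)) ^ 2)) := by
    apply Real.sqrt_le_sqrt
    have h1 : 0 ≤ ∫ p in Set.Ico (0:ℝ) 1 ×ˢ Set.Ico (0:ℝ) 1, (u p) ^ 2 :=
      integral_nonneg fun p => sq_nonneg _
    have h2 : 0 ≤ ∫ p in Set.Ico (0:ℝ) 1 ×ˢ Set.Ico (0:ℝ) 1, (fderiv ℝ u p (0, 1)) ^ 2 :=
      integral_nonneg fun p => sq_nonneg _
    linarith
  have hdiv : |F 0| ≤ ℓ⁻¹ * (∫ s in (0:ℝ)..ℓ, |F s|) + J := by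
    have h := hB
    have hpos : 0 < ℓ := hℓ0
    rw [← mul_le_mul_iff_right₀ hpos]
    calc ℓ * |F 0| ≤ (∫ s in (0:ℝ)..ℓ, |F s|) + ℓ * J := hB
      _ = ℓ * (ℓ⁻¹ * (∫ s in (0:ℝ)..ℓ, |F s|) + J) := by
          field_simp
  calc |F 0| ≤ ℓ⁻¹ * (∫ s in (0:ℝ)..ℓ, |F s|) + J := hdiv
    _ ≤ ℓ⁻¹ * (∫ p in Set.Ico (0:ℝ) 1 ×ˢ Set.Ico (0:ℝ) 1, |u p|) +
        Real.sqrt ℓ * Real.sqrt (∫ p in Set.Ico (0:ℝ) 1 ×ˢ Set.Ico (0:ℝ) 1, D p ^ 2) := by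
        apply add_le_add
        · exact mul_le_mul_of_nonneg_left hC (inv_nonneg.2 hℓ0')
        · exact hJbound
    _ ≤ _ := by
        rw [one_mul]
        apply add_le_add_right
        exact mul_le_mul_of_nonneg_left hsum (Real.sqrt_nonneg _)
end
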